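/- Let S = ⟨s/t_1, ..., s/t_k⟩ with t_1 > ... > t_k > 1 pairwise coprime and s = t_1⋯t_k. For every m ≥ 1, the length set of ms in S has cardinality at least mk - m + 1. -/

import Mathlib

open Finset

namespace LengthDensity

/-- The set of factorizations of `n` with respect to generators `g`. -/
def facs {k : ℕ} (g : Fin k → ℕ) (n : ℕ) : Set (Fin k → ℕ) :=
  {z | ∑ i, z i * g i = n}

/-- Membership in the numerical semigroup generated by `g`. -/
def mem {k : ℕ} (g : Fin k → ℕ) (n : ℕ) : Prop := (facs g n).Nonempty

/-- The set of factorization lengths of `n`. -/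
def lengthSet {k : ℕ} (g : Fin k → ℕ) (n : ℕ) : Set ℕ :=
  (fun z => ∑ i, z i) '' facs g n

/-- Length density of an element. -/
noncomputable def LD {k : ℕ} (g : Fin k → ℕ) (n : ℕ) : ℝ :=
  (((lengthSet g n).ncard : ℝ) - 1) /
    (((sSup (lengthSet g n) : ℕ) : ℝ) - ((sInf (lengthSet g n) : ℕ) : ℝ))

/-- Length density of the semigroup: infimum of `LD` over elements with
non-singleton length set. -/
noncomputable def LDsgp {k : ℕ} (g : Fin k → ℕ) : ℝ :=
  sInf {x : ℝ | ∃ n : ℕ, 2 ≤ (lengthSet g n).ncard ∧ x = LD g n}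

/-- The delta set (successive gaps) of a set of naturals. -/
def deltaOf (L : Set ℕ) : Set ℕ :=
  {d | ∃ a ∈ L, ∃ b ∈ L, a < b ∧ (∀ c ∈ L, ¬(a < c ∧ c < b)) ∧ d = b - a}

/-- The delta set of an element. -/
def delta {k : ℕ} (g : Fin k → ℕ) (n : ℕ) : Set ℕ := deltaOf (lengthSet g n)

/-- The delta set of the semigroup. -/
def Delta {k : ℕ} (g : Fin k → ℕ) : Set ℕ := ⋃ n : ℕ, delta g n

/-- Adjacency in the factorization graph of `n`: two factorizations of `n`
sharing a positive coordinate. -/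
def adj {k : ℕ} (g : Fin k → ℕ) (n : ℕ) (z z' : Fin k → ℕ) : Prop :=
  z ∈ facs g n ∧ z' ∈ facs g n ∧ ∃ i, 0 < z i ∧ 0 < z' i

/-- `n` is a Betti element: its factorization graph is disconnected. -/
def IsBetti {k : ℕ} (g : Fin k → ℕ) (n : ℕ) : Prop :=
  ∃ z ∈ facs g n, ∃ z' ∈ facs g n, ¬ Relation.ReflTransGen (adj g n) z z'

/-- The semigroup is tasty: `LD(S) > 1 / max Δ(S)`. -/
def Tasty {k : ℕ} (g : Fin k → ℕ) : Prop := LDsgp g > 1 / ((sSup (Delta g) : ℕ) : ℝ)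

/-- The semigroup is bland: `LD(S) = 1 / max Δ(S)`. -/
def Bland {k : ℕ} (g : Fin k → ℕ) : Prop := LDsgp g = 1 / ((sSup (Delta g) : ℕ) : ℝ)

/-- `g` is a minimal generating set: no generator is a nonnegative integer
combination of the others. -/
def IsMinGen {k : ℕ} (g : Fin k → ℕ) : Prop :=
  ∀ i, ¬ ∃ z : Fin k → ℕ, z i = 0 ∧ ∑ j, z j * g j = g i

/-- `n` is a non-atom of the semigroup generated by `g`:
it is a sum of two nonzero elements. -/
def NonAtom {k : ℕ} (g : Fin k → ℕ) (n : ℕ) : Prop :=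
  ∃ a b : ℕ, 0 < a ∧ 0 < b ∧ mem g a ∧ mem g b ∧ n = a + b


lemma sum_single_mul {k : ℕ} (g : Fin k → ℕ) (a : Fin k) (x : ℕ) :
    ∑ i, (Pi.single a x : Fin k → ℕ) i * g i = x * g a := by
  rw [Finset.sum_eq_single a]
  · simp
  · intro b _ hb; simp [Pi.single_eq_of_ne hb]
  · simp

lemma ineq1 (c d T1 T2 : ℕ) (h : T2 < T1) :
    c * T1 + (d + 1) * T2 < (c + 1) * T1 + d * T2 := by
  have h1 : (d + 1) * T2 = d * T2 + T2 := by ring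
  have h2 : (c + 1) * T1 = c * T1 + T1 := by ring
  rw [h1, h2]; linarith

lemma ineq2 (d T1 T2 : ℕ) (h : T2 < T1) : (d + 1) * T2 < 1 * T1 + d * T2 := by
  have h1 : (d + 1) * T2 = d * T2 + T2 := by ring
  rw [h1, one_mul]; linarith

theorem stmt5 (k : ℕ) (hk : 1 ≤ k) (t : Fin (k + 1) → ℕ)
    (hanti : StrictAnti t) (ht : ∀ i, 1 < t i)
    (hcop : ∀ i j, i ≠ j → Nat.Coprime (t i) (t j)) :
    ∀ m : ℕ, 1 ≤ m →
      m * (k + 1) - m + 1 ≤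
        (lengthSet (fun i => (∏ j, t j) / t i) (m * ∏ j, t j)).ncard := by
  intro m hm
  set s := ∏ j, t j with hs
  have htpos : ∀ i, 0 < t i := fun i => lt_trans one_pos (ht i)
  have hdvd : ∀ i : Fin (k+1), t i ∣ s := fun i => Finset.dvd_prod_of_mem _ (Finset.mem_univ i)
  have hspos : 0 < s := Finset.prod_pos (fun i _ => htpos i)
  have hms : ∀ i : Fin (k+1), t i * (s / t i) = s := fun i => Nat.mul_div_cancel' (hdvd i)
  have hgpos : ∀ i : Fin (k+1), 0 < s / t i :=
    fun i => Nat.div_pos (Nat.le_of_dvd hspos (hdvd i)) (htpos i)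
  have hmpos : 0 < m := hm
  set g : Fin (k+1) → ℕ := fun i => s / t i with hg
  set t' : ℕ → ℕ := fun i => t ⟨min i k, by omega⟩ with ht'
  have ht'anti : ∀ i j, i < j → j ≤ k → t' j < t' i := by
    intro i j hij hj
    apply hanti
    simp only [Fin.lt_def]
    omega
  set φ : ℕ → ℕ := fun n => (m - n % m) * t' (n / m) + (n % m) * t' (n / m + 1) with hφ
  have hstep : ∀ n, n < m * k → φ (n+1) < φ n := by
    intro n hn
    set q := n / m with hq
    set r := n % m with hr
    have hrm : r < m := Nat.mod_lt _ hmpos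
    have hnqr : m * q + r = n := Nat.div_add_mod n m
    have hqk : q < k := by
      rw [hq]
      exact Nat.div_lt_of_lt_mul (by omega)
    have hT : t' (q+1) < t' q := ht'anti q (q+1) (by omega) (by omega)
    have hφn : φ n = (m - r) * t' q + r * t' (q+1) := rfl
    by_cases hcase : r + 1 < m
    · have h1 : (n+1) / m = q := by
        rw [show n + 1 = m * q + (r+1) from by omega, Nat.mul_add_div hmpos,
          Nat.div_eq_of_lt hcase, Nat.add_zero]
      have h2 : (n+1) % m = r + 1 := by
        rw [show n + 1 = m * q + (r+1) from by omega, Nat.mul_add_mod,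
          Nat.mod_eq_of_lt hcase]
      have hφn1 : φ (n+1) = (m - (r+1)) * t' q + (r+1) * t' (q+1) := by
        rw [hφ]
        simp only [h1, h2]
      rw [hφn1, hφn, show m - r = (m - (r+1)) + 1 from by omega]
      exact ineq1 _ _ _ _ hT
    · have hrm1 : r + 1 = m := by omega
      have h1 : (n+1) / m = q + 1 := by
        rw [show n + 1 = m * (q+1) from by rw [Nat.mul_add, Nat.mul_one]; omega, Nat.mul_div_cancel_left _ hmpos]
      have h2 : (n+1) % m = 0 := by
        rw [show n + 1 = m * (q+1) from by rw [Nat.mul_add, Nat.mul_one]; omega, Nat.mul_mod_right]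
      have hφn1 : φ (n+1) = m * t' (q+1) := by
        rw [hφ]
        simp only [h1, h2, Nat.sub_zero, Nat.zero_mul, Nat.add_zero]
      rw [hφn1, hφn, show m - r = 1 from by omega, show r = (m-1) from by omega,
        show m = (m-1) + 1 from by omega]
      exact ineq2 _ _ _ hT
  have hanti2 : ∀ b a, a < b → b ≤ m * k → φ b < φ a := by
    intro b
    induction b with
    | zero => intro a h; omega
    | succ b ih =>
      intro a hab hb
      rcases Nat.lt_succ_iff_lt_or_eq.mp hab with h | h
      · exact lt_trans (hstep b (by omega)) (ih a h (by omega))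
      · rw [h]; exact hstep b (by omega)
  have hmem : ∀ n ≤ m * k, φ n ∈ lengthSet g (m * s) := by
    intro n hn
    set q := n / m with hq
    set r := n % m with hr
    have hrm : r < m := Nat.mod_lt _ hmpos
    have hnqr : m * q + r = n := Nat.div_add_mod n m
    have hqk : q ≤ k := by
      rw [hq]
      exact Nat.div_le_of_le_mul (by omega)
    set a : Fin (k+1) := ⟨q, by omega⟩ with ha
    set b : Fin (k+1) := ⟨min (q+1) k, by omega⟩ with hb
    have hta : t' q = t a := by
      simp only [ht']
      congr 1
      exact Fin.ext (show min q k = q from min_eq_left hqk)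
    have htb : t' (q+1) = t b := rfl
    set A : Fin (k+1) → ℕ := (Pi.single a ((m - r) * t a) : Fin (k+1) → ℕ) with hA
    set B : Fin (k+1) → ℕ := (Pi.single b (r * t b) : Fin (k+1) → ℕ) with hB
    refine ⟨A + B, ?_, ?_⟩
    · show ∑ i, (A + B) i * g i = m * s
      have expand : ∀ i, (A + B) i * g i = A i * g i + B i * g i := by
        intro i; simp [add_mul]
      rw [Finset.sum_congr rfl (fun i _ => expand i), Finset.sum_add_distrib,
        hA, hB, sum_single_mul, sum_single_mul]
      have e1 : (m - r) * t a * g a = (m - r) * s := by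
        rw [mul_assoc, hg, hms a]
      have e2 : r * t b * g b = r * s := by
        rw [mul_assoc, hg, hms b]
      rw [e1, e2, ← add_mul]
      congr 1
      omega
    · show ∑ i, (A + B) i = φ n
      have expand : ∀ i, (A + B) i = A i + B i := fun i => rfl
      rw [Finset.sum_congr rfl (fun i _ => expand i), Finset.sum_add_distrib]
      have s1 : ∑ i, A i = (m - r) * t a := by
        rw [hA]; simp [Finset.sum_pi_single']
      have s2 : ∑ i, B i = r * t b := by
        rw [hB]; simp [Finset.sum_pi_single']
      rw [s1, s2]
      show _ = (m - r) * t' q + r * t' (q+1)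
      rw [hta, htb]
  have hfin : (lengthSet g (m * s)).Finite := by
    apply Set.Finite.subset (Set.finite_Iic (m * s))
    rintro x ⟨z, hz, rfl⟩
    simp only [Set.mem_Iic]
    calc ∑ i, z i ≤ ∑ i, z i * g i := by
          apply Finset.sum_le_sum
          intro i _
          exact Nat.le_mul_of_pos_right _ (hgpos i)
      _ = m * s := hz
  have hsub : (↑((Finset.range (m * k + 1)).image φ) : Set ℕ) ⊆ lengthSet g (m * s) := by
    intro x hx
    simp only [Finset.coe_image, Set.mem_image, Finset.mem_coe, Finset.mem_range] at hx
    obtain ⟨n, hn, rfl⟩ := hx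
    exact hmem n (by omega)
  have hcard : ((Finset.range (m * k + 1)).image φ).card = m * k + 1 := by
    rw [Finset.card_image_of_injOn, Finset.card_range]
    intro x hx y hy hxy
    simp only [Finset.coe_range, Set.mem_Iio] at hx hy
    by_contra hne
    rcases Nat.lt_or_ge x y with h | h
    · exact absurd hxy (Nat.ne_of_lt (hanti2 y x h (by omega))).symm
    · have h' : y < x := by omega
      exact absurd hxy (Nat.ne_of_lt (hanti2 x y h' (by omega)))
  have hle := Set.ncard_le_ncard hsub hfin
  rw [Set.ncard_coe_finset, hcard] at hle
  have hmk : m * (k + 1) - m + 1 = m * k + 1 := by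
    have : m * (k + 1) = m * k + m := by ring
    omega
  rw [hmk]
  exact hle
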